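/- Let J be a 3×3 real matrix all of whose complex eigenvalues have negative real part, let d₁, d₂, d₃ > 0 be reals, and for y ≥ 0 set J(y) = J − y·diag(d₁, d₂, d₃). Then the system admits a Turing instability if and only if it does not admit a Turing–Hopf instability and there exists y' > 0 such that det J(y') > 0. -/

import Mathlib

open Matrix Polynomial

/-- The multiset of complex eigenvalues of a real 3×3 matrix, i.e. the roots of its
characteristic polynomial regarded as a polynomial over `ℂ`. -/
noncomputable def eigs (M : Matrix (Fin 3) (Fin 3) ℝ) : Multiset ℂ :=
  (M.charpoly.map (algebraMap ℝ ℂ)).roots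

/-- `Jmat J d₁ d₂ d₃ y = J - y • diag(d₁, d₂, d₃)`. -/
noncomputable def Jmat (J : Matrix (Fin 3) (Fin 3) ℝ) (d₁ d₂ d₃ y : ℝ) :
    Matrix (Fin 3) (Fin 3) ℝ :=
  J - y • Matrix.diagonal ![d₁, d₂, d₃]

namespace TuringAux

local notation "conj'" => starRingEnd ℂ

/-! ### Coefficient functions of the characteristic polynomial of `Jmat` -/

/-- coefficient of `X^2` (negative trace) -/
def Af (J : Matrix (Fin 3) (Fin 3) ℝ) (d₁ d₂ d₃ : ℝ) : ℝ → ℝ := fun y =>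
  (d₁ + d₂ + d₃) * y - (J 0 0 + J 1 1 + J 2 2)

/-- coefficient of `X` (sum of principal 2×2 minors) -/
def Bf (J : Matrix (Fin 3) (Fin 3) ℝ) (d₁ d₂ d₃ : ℝ) : ℝ → ℝ := fun y =>
  (d₁*d₂ + d₁*d₃ + d₂*d₃) * y^2
    - (d₁*(J 1 1 + J 2 2) + d₂*(J 0 0 + J 2 2) + d₃*(J 0 0 + J 1 1)) * y
    + (J 0 0 * J 1 1 - J 0 1 * J 1 0 + J 0 0 * J 2 2 - J 0 2 * J 2 0
        + J 1 1 * J 2 2 - J 1 2 * J 2 1)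

/-- constant coefficient (negative determinant) -/
def Cf (J : Matrix (Fin 3) (Fin 3) ℝ) (d₁ d₂ d₃ : ℝ) : ℝ → ℝ := fun y =>
  d₁*d₂*d₃ * y^3
    - (d₁*d₂*(J 2 2) + d₁*d₃*(J 1 1) + d₂*d₃*(J 0 0)) * y^2
    + (d₁*(J 1 1 * J 2 2 - J 1 2 * J 2 1) + d₂*(J 0 0 * J 2 2 - J 0 2 * J 2 0)
        + d₃*(J 0 0 * J 1 1 - J 0 1 * J 1 0)) * y
    - (J 0 0 * J 1 1 * J 2 2 - J 0 0 * J 1 2 * J 2 1 - J 0 1 * J 1 0 * J 2 2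
        + J 0 1 * J 1 2 * J 2 0 + J 0 2 * J 1 0 * J 2 1 - J 0 2 * J 2 0 * J 1 1)

theorem charpoly_Jmat (J : Matrix (Fin 3) (Fin 3) ℝ) (d₁ d₂ d₃ y : ℝ) :
    (Jmat J d₁ d₂ d₃ y).charpoly =
      X^3 + C (Af J d₁ d₂ d₃ y) * X^2 + C (Bf J d₁ d₂ d₃ y) * X + C (Cf J d₁ d₂ d₃ y) := by
  apply Polynomial.funext
  intro t
  rw [Matrix.charpoly, Matrix.det_fin_three]
  simp [charmatrix_apply_eq, charmatrix_apply_ne, Jmat, Matrix.sub_apply, Matrix.smul_apply,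
    Matrix.diagonal_apply, Af, Bf, Cf]
  ring

theorem det_Jmat (J : Matrix (Fin 3) (Fin 3) ℝ) (d₁ d₂ d₃ y : ℝ) :
    (Jmat J d₁ d₂ d₃ y).det = -(Cf J d₁ d₂ d₃ y) := by
  rw [Matrix.det_fin_three]
  simp [Jmat, Matrix.sub_apply, Matrix.smul_apply, Matrix.diagonal_apply, Cf]
  ring

/-! ### Generic facts about `eigs` -/

lemma eigs_card (M : Matrix (Fin 3) (Fin 3) ℝ) : Multiset.card (eigs M) = 3 := by
  have hm : (M.charpoly.map (algebraMap ℝ ℂ)).Monic := M.charpoly_monic.map _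
  have hs : (M.charpoly.map (algebraMap ℝ ℂ)).Splits :=
    IsAlgClosed.splits _
  have hd : (M.charpoly.map (algebraMap ℝ ℂ)).natDegree = 3 := by
    rw [M.charpoly_monic.natDegree_map, M.charpoly_natDegree_eq_dim]
    simp
  rw [eigs, Polynomial.splits_iff_card_roots.mp hs, hd]

lemma eigs_conj (M : Matrix (Fin 3) (Fin 3) ℝ) :
    (eigs M).map (starRingEnd ℂ) = eigs M := by
  have hs : (M.charpoly.map (algebraMap ℝ ℂ)).Splits :=
    IsAlgClosed.splits _
  have h1 : ((M.charpoly.map (algebraMap ℝ ℂ)).map (starRingEnd ℂ)) =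
      M.charpoly.map (algebraMap ℝ ℂ) := by
    rw [Polynomial.map_map]
    congr 1
    ext r : 1
    simp
  calc (eigs M).map (starRingEnd ℂ)
      = ((M.charpoly.map (algebraMap ℝ ℂ)).map (starRingEnd ℂ)).roots := by
        rw [eigs, hs.roots_map_of_injective (RingHom.injective _)]
    _ = eigs M := by rw [h1]; rfl

lemma roots_triple (M : Matrix (Fin 3) (Fin 3) ℝ) (a b c : ℝ)
    (h : M.charpoly = X^3 + C a * X^2 + C b * X + C c) :
    ∃ z₁ z₂ z₃ : ℂ, eigs M = {z₁, z₂, z₃} ∧ (a:ℂ) = -(z₁+z₂+z₃) ∧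
      (b:ℂ) = z₁*z₂+z₁*z₃+z₂*z₃ ∧ (c:ℂ) = -(z₁*z₂*z₃) := by
  obtain ⟨z₁, z₂, z₃, hz⟩ := Multiset.card_eq_three.mp (eigs_card M)
  refine ⟨z₁, z₂, z₃, hz, ?_, ?_, ?_⟩ <;> {
    have hm : (M.charpoly.map (algebraMap ℝ ℂ)).Monic := M.charpoly_monic.map _
    have hs : (M.charpoly.map (algebraMap ℝ ℂ)).Splits :=
      IsAlgClosed.splits _
    have hfact : M.charpoly.map (algebraMap ℝ ℂ)
        = (X - C z₁) * ((X - C z₂) * (X - C z₃)) := by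
      have := hs.eq_prod_roots_of_monic hm
      rw [show (M.charpoly.map (algebraMap ℝ ℂ)).roots = eigs M from rfl, hz] at this
      simpa using this
    have hexp : M.charpoly.map (algebraMap ℝ ℂ)
        = X^3 + C (a:ℂ) * X^2 + C (b:ℂ) * X + C (c:ℂ) := by
      rw [h]; simp
    have key : ∀ w : ℂ, w^3 + a*w^2 + b*w + c = (w - z₁) * ((w - z₂) * (w - z₃)) := by
      intro w
      have := congrArg (Polynomial.eval w) (hexp.symm.trans hfact)
      simpa using this
    have e0 := key 0
    have e1 := key 1
    have em1 := key (-1)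
    push_cast at e0 e1 em1 ⊢
    first
      | linear_combination (1/2 : ℂ) * e1 + (1/2 : ℂ) * em1 - e0
      | linear_combination (1/2 : ℂ) * e1 - (1/2 : ℂ) * em1
      | linear_combination e0 }

/-! ### Multiset utilities and root classification -/

lemma mswap1 {α : Type*} (a b c : α) : ({a, b, c} : Multiset α) = {b, a, c} :=
  Multiset.cons_swap a b {c}

lemma mswap2 {α : Type*} (a b c : α) : ({a, b, c} : Multiset α) = {a, c, b} :=
  congrArg (a ::ₘ ·) (Multiset.cons_swap b c 0)

lemma mcancel {α : Type*} {a b : α} {x y : α} (h : ({a, b, x} : Multiset α) = {a, b, y}) :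
    x = y := by
  simp only [Multiset.insert_eq_cons, Multiset.cons_inj_right] at h
  simpa using h

lemma mmap3 (f : ℂ → ℂ) (a b c : ℂ) :
    ({a, b, c} : Multiset ℂ).map f = {f a, f b, f c} := by
  simp [Multiset.insert_eq_cons]

lemma classify_aux (z₁ z₂ z₃ : ℂ) (h1 : z₁.im ≠ 0)
    (hconj : ({z₁, z₂, z₃} : Multiset ℂ).map conj' = {z₁, z₂, z₃}) :
    ∃ (x : ℝ) (w : ℂ), w.im ≠ 0 ∧ ({z₁, z₂, z₃} : Multiset ℂ) = {(x:ℂ), w, conj' w} := by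
  have hmem : conj' z₁ ∈ ({z₁, z₂, z₃} : Multiset ℂ) := by
    rw [← hconj]
    exact Multiset.mem_map_of_mem _ (by simp)
  have hne : conj' z₁ ≠ z₁ := fun h => h1 (Complex.conj_eq_iff_im.mp h)
  rw [mmap3] at hconj
  simp only [Multiset.insert_eq_cons, Multiset.mem_cons, Multiset.mem_singleton] at hmem
  rcases hmem with h | h | h
  · exact absurd h hne
  · have h2 : conj' z₂ = z₁ := by rw [← h]; exact Complex.conj_conj z₁
    rw [h, h2] at hconj
    have h3 : conj' z₃ = z₃ := mcancel ((mswap1 z₁ z₂ (conj' z₃)).trans hconj)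
    refine ⟨z₃.re, z₁, h1, ?_⟩
    have hz3 : (z₃.re : ℂ) = z₃ := Complex.conj_eq_iff_re.mp h3
    rw [hz3, h]
    exact (mswap2 z₁ z₂ z₃).trans (mswap1 z₁ z₃ z₂)
  · have h3 : conj' z₃ = z₁ := by rw [← h]; exact Complex.conj_conj z₁
    rw [h, h3] at hconj
    have h2 : conj' z₂ = z₂ := by
      refine mcancel (a := z₁) (b := z₃) ?_
      calc ({z₁, z₃, conj' z₂} : Multiset ℂ) = {z₃, z₁, conj' z₂} := mswap1 _ _ _
        _ = {z₃, conj' z₂, z₁} := mswap2 _ _ _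
        _ = {z₁, z₂, z₃} := hconj
        _ = {z₁, z₃, z₂} := mswap2 _ _ _
    refine ⟨z₂.re, z₁, h1, ?_⟩
    have hz2 : (z₂.re : ℂ) = z₂ := Complex.conj_eq_iff_re.mp h2
    rw [hz2, h]
    exact mswap1 z₁ z₂ z₃

lemma classify (z₁ z₂ z₃ : ℂ)
    (hconj : ({z₁, z₂, z₃} : Multiset ℂ).map conj' = {z₁, z₂, z₃}) :
    (∃ r₁ r₂ r₃ : ℝ, ({z₁, z₂, z₃} : Multiset ℂ) = {(r₁:ℂ), (r₂:ℂ), (r₃:ℂ)}) ∨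
    (∃ (x : ℝ) (w : ℂ), w.im ≠ 0 ∧ ({z₁, z₂, z₃} : Multiset ℂ) = {(x:ℂ), w, conj' w}) := by
  by_cases h1 : z₁.im = 0
  · by_cases h2 : z₂.im = 0
    · by_cases h3 : z₃.im = 0
      · left
        refine ⟨z₁.re, z₂.re, z₃.re, ?_⟩
        have e1 : (z₁.re : ℂ) = z₁ := Complex.ext (by simp) (by simp [h1])
        have e2 : (z₂.re : ℂ) = z₂ := Complex.ext (by simp) (by simp [h2])
        have e3 : (z₃.re : ℂ) = z₃ := Complex.ext (by simp) (by simp [h3])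
        rw [e1, e2, e3]
      · have hperm : ({z₁, z₂, z₃} : Multiset ℂ) = {z₃, z₂, z₁} :=
          ((mswap2 z₁ z₂ z₃).trans (mswap1 z₁ z₃ z₂)).trans (mswap2 z₃ z₁ z₂)
        obtain ⟨x, w, hw, hS⟩ := classify_aux z₃ z₂ z₁ h3 (by rw [← hperm, hconj, hperm])
        exact Or.inr ⟨x, w, hw, hperm.trans hS⟩
    · have hperm : ({z₁, z₂, z₃} : Multiset ℂ) = {z₂, z₁, z₃} := mswap1 _ _ _
      obtain ⟨x, w, hw, hS⟩ := classify_aux z₂ z₁ z₃ h2 (by rw [← hperm, hconj, hperm])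
      exact Or.inr ⟨x, w, hw, hperm.trans hS⟩
  · exact Or.inr (classify_aux z₁ z₂ z₃ h1 hconj)

/-! ### Symmetric function transport -/

lemma sym_eq {z₁ z₂ z₃ u v w : ℂ} (h : ({z₁, z₂, z₃} : Multiset ℂ) = {u, v, w}) :
    z₁+z₂+z₃ = u+v+w ∧ z₁*z₂+z₁*z₃+z₂*z₃ = u*v+u*w+v*w ∧ z₁*z₂*z₃ = u*v*w := by
  have hs := congrArg Multiset.sum h
  have hp := congrArg Multiset.prod h
  have hq := congrArg (fun s => (Multiset.map (fun z : ℂ => z*z) s).sum) h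
  simp [Multiset.insert_eq_cons, Multiset.sum_cons, Multiset.prod_cons] at hs hp hq
  refine ⟨by linear_combination hs, ?_, by linear_combination hp⟩
  linear_combination ((z₁+z₂+z₃+u+v+w)/2) * hs - (1/2 : ℂ) * hq

lemma vieta_real {z₁ z₂ z₃ : ℂ} {A B C : ℝ} (r₁ r₂ r₃ : ℝ)
    (hA : (A:ℂ) = -(z₁+z₂+z₃)) (hB : (B:ℂ) = z₁*z₂+z₁*z₃+z₂*z₃) (hC : (C:ℂ) = -(z₁*z₂*z₃))
    (hS : ({z₁, z₂, z₃} : Multiset ℂ) = {(r₁:ℂ), (r₂:ℂ), (r₃:ℂ)}) :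
    A = -(r₁+r₂+r₃) ∧ B = r₁*r₂+r₁*r₃+r₂*r₃ ∧ C = -(r₁*r₂*r₃) := by
  obtain ⟨hs, hq, hp⟩ := sym_eq hS
  refine ⟨?_, ?_, ?_⟩
  · have h := hA; rw [hs] at h; exact_mod_cast h
  · have h := hB; rw [hq] at h; exact_mod_cast h
  · have h := hC; rw [hp] at h; exact_mod_cast h

lemma vieta_pair {z₁ z₂ z₃ : ℂ} {A B C : ℝ} (x : ℝ) (w : ℂ)
    (hA : (A:ℂ) = -(z₁+z₂+z₃)) (hB : (B:ℂ) = z₁*z₂+z₁*z₃+z₂*z₃) (hC : (C:ℂ) = -(z₁*z₂*z₃))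
    (hS : ({z₁, z₂, z₃} : Multiset ℂ) = {(x:ℂ), w, conj' w}) :
    A = -(x + 2*w.re) ∧ B = 2*x*w.re + (w.re^2 + w.im^2) ∧ C = -(x*(w.re^2 + w.im^2)) := by
  obtain ⟨hs, hq, hp⟩ := sym_eq hS
  have e1 := congrArg Complex.re (hA.trans (by rw [hs]))
  have e2 := congrArg Complex.re (hB.trans (by rw [hq]))
  have e3 := congrArg Complex.re (hC.trans (by rw [hp]))
  simp [Complex.add_re, Complex.mul_re, Complex.mul_im] at e1 e2 e3
  refine ⟨by linarith, by nlinarith [e2], by nlinarith [e3]⟩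

/-! ### Sign lemmas -/

lemma lemWreal (r₁ r₂ r₃ A B C : ℝ) (h1 : 0 < r₁)
    (ha : A = -(r₁+r₂+r₃)) (hb : B = r₁*r₂+r₁*r₃+r₂*r₃) (hc : C = -(r₁*r₂*r₃))
    (hApos : 0 < A) (hCnn : 0 ≤ C) : B < 0 ∧ A*B - C < 0 := by
  have h23 : r₂ + r₃ < 0 := by linarith
  have hprod : r₂ * r₃ ≤ 0 := by nlinarith
  constructor
  · nlinarith [mul_neg_of_pos_of_neg h1 h23]
  · have e : A*B - C = -((r₁+r₂)*((r₂+r₃)*(r₃+r₁))) := by rw [ha, hb, hc]; ring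
    rcases mul_nonpos_iff.mp hprod with ⟨h2, h3⟩ | ⟨h2, h3⟩
    · have h12 : 0 < r₁ + r₂ := by linarith
      have h13 : r₁ + r₃ < 0 := by linarith
      nlinarith [mul_pos_of_neg_of_neg h23 h13, mul_pos (mul_pos_of_neg_of_neg h23 h13) h12]
    · have h12 : r₁ + r₂ < 0 := by linarith
      have h13 : 0 < r₁ + r₃ := by linarith
      nlinarith [mul_neg_of_neg_of_pos h23 h13,
        mul_pos_of_neg_of_neg h12 (mul_neg_of_neg_of_pos h23 h13)]

lemma re_of_mem_cast (r : ℝ) {z : ℂ} (h : z = (r:ℂ)) : z.re = r := by rw [h]; simp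

lemma lemW {A B C : ℝ} {z₁ z₂ z₃ : ℂ}
    (hconj : ({z₁, z₂, z₃} : Multiset ℂ).map conj' = {z₁, z₂, z₃})
    (hA : (A:ℂ) = -(z₁+z₂+z₃)) (hB : (B:ℂ) = z₁*z₂+z₁*z₃+z₂*z₃) (hC : (C:ℂ) = -(z₁*z₂*z₃))
    (hApos : 0 < A) (hCnn : 0 ≤ C)
    (z : ℂ) (hz : z ∈ ({z₁, z₂, z₃} : Multiset ℂ)) (hre : 0 < z.re) (him : z.im = 0) :
    B < 0 ∧ A*B - C < 0 := by
  rcases classify z₁ z₂ z₃ hconj with ⟨r₁, r₂, r₃, hS⟩ | ⟨x, w, hwim, hS⟩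
  · obtain ⟨ha, hb, hc⟩ := vieta_real r₁ r₂ r₃ hA hB hC hS
    rw [hS] at hz
    simp only [Multiset.insert_eq_cons, Multiset.mem_cons, Multiset.mem_singleton] at hz
    rcases hz with h | h | h
    · exact lemWreal r₁ r₂ r₃ A B C (re_of_mem_cast r₁ h ▸ hre) ha hb hc hApos hCnn
    · exact lemWreal r₂ r₁ r₃ A B C (re_of_mem_cast r₂ h ▸ hre)
        (by rw [ha]; ring) (by rw [hb]; ring) (by rw [hc]; ring) hApos hCnn
    · exact lemWreal r₃ r₁ r₂ A B C (re_of_mem_cast r₃ h ▸ hre)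
        (by rw [ha]; ring) (by rw [hb]; ring) (by rw [hc]; ring) hApos hCnn
  · exfalso
    obtain ⟨ha, hb, hc⟩ := vieta_pair x w hA hB hC hS
    rw [hS] at hz
    simp only [Multiset.insert_eq_cons, Multiset.mem_cons, Multiset.mem_singleton] at hz
    have hx : 0 < x := by
      rcases hz with h | h | h
      · exact re_of_mem_cast x h ▸ hre
      · exact absurd (h ▸ him) hwim
      · exact absurd (by simpa using (h ▸ him : (conj' w).im = 0)) hwim
    have him2 : 0 < w.im * w.im := mul_self_pos.mpr hwim
    nlinarith [sq_nonneg w.re, mul_pos hx (show 0 < w.re^2 + w.im^2 by nlinarith)]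

lemma lemU {A B C : ℝ} {z₁ z₂ z₃ : ℂ}
    (hconj : ({z₁, z₂, z₃} : Multiset ℂ).map conj' = {z₁, z₂, z₃})
    (hA : (A:ℂ) = -(z₁+z₂+z₃)) (hB : (B:ℂ) = z₁*z₂+z₁*z₃+z₂*z₃) (hC : (C:ℂ) = -(z₁*z₂*z₃))
    (hall : ∀ z ∈ ({z₁, z₂, z₃} : Multiset ℂ), z.re ≤ 0) :
    0 ≤ A*B - C := by
  rcases classify z₁ z₂ z₃ hconj with ⟨r₁, r₂, r₃, hS⟩ | ⟨x, w, hwim, hS⟩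
  · obtain ⟨ha, hb, hc⟩ := vieta_real r₁ r₂ r₃ hA hB hC hS
    have m1 : ((r₁:ℂ)) ∈ ({z₁, z₂, z₃} : Multiset ℂ) := by rw [hS]; simp
    have m2 : ((r₂:ℂ)) ∈ ({z₁, z₂, z₃} : Multiset ℂ) := by rw [hS]; simp
    have m3 : ((r₃:ℂ)) ∈ ({z₁, z₂, z₃} : Multiset ℂ) := by rw [hS]; simp
    have h1 : r₁ ≤ 0 := by simpa using hall _ m1
    have h2 : r₂ ≤ 0 := by simpa using hall _ m2
    have h3 : r₃ ≤ 0 := by simpa using hall _ m3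
    have e : A*B - C = -((r₁+r₂)*((r₂+r₃)*(r₃+r₁))) := by rw [ha, hb, hc]; ring
    nlinarith [mul_nonneg (neg_nonneg.mpr (by linarith : r₂+r₃ ≤ 0))
        (neg_nonneg.mpr (by linarith : r₃+r₁ ≤ 0)),
      mul_nonneg (mul_nonneg (neg_nonneg.mpr (by linarith : r₂+r₃ ≤ 0))
        (neg_nonneg.mpr (by linarith : r₃+r₁ ≤ 0))) (neg_nonneg.mpr (by linarith : r₁+r₂ ≤ 0))]
  · obtain ⟨ha, hb, hc⟩ := vieta_pair x w hA hB hC hS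
    have mx : ((x:ℂ)) ∈ ({z₁, z₂, z₃} : Multiset ℂ) := by rw [hS]; simp
    have mw : w ∈ ({z₁, z₂, z₃} : Multiset ℂ) := by rw [hS]; simp
    have hx : x ≤ 0 := by simpa using hall _ mx
    have hu : w.re ≤ 0 := hall _ mw
    subst ha hb hc
    nlinarith [mul_nonneg (neg_nonneg.mpr hu) (sq_nonneg (x + w.re)),
      mul_nonneg (neg_nonneg.mpr hu) (sq_nonneg w.im)]

lemma lemRH {A B C : ℝ} {z₁ z₂ z₃ : ℂ}
    (hconj : ({z₁, z₂, z₃} : Multiset ℂ).map conj' = {z₁, z₂, z₃})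
    (hA : (A:ℂ) = -(z₁+z₂+z₃)) (hB : (B:ℂ) = z₁*z₂+z₁*z₃+z₂*z₃) (hC : (C:ℂ) = -(z₁*z₂*z₃))
    (hall : ∀ z ∈ ({z₁, z₂, z₃} : Multiset ℂ), z.re < 0) :
    0 < A ∧ 0 < C ∧ 0 < A*B - C := by
  rcases classify z₁ z₂ z₃ hconj with ⟨r₁, r₂, r₃, hS⟩ | ⟨x, w, hwim, hS⟩
  · obtain ⟨ha, hb, hc⟩ := vieta_real r₁ r₂ r₃ hA hB hC hS
    have m1 : ((r₁:ℂ)) ∈ ({z₁, z₂, z₃} : Multiset ℂ) := by rw [hS]; simp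
    have m2 : ((r₂:ℂ)) ∈ ({z₁, z₂, z₃} : Multiset ℂ) := by rw [hS]; simp
    have m3 : ((r₃:ℂ)) ∈ ({z₁, z₂, z₃} : Multiset ℂ) := by rw [hS]; simp
    have h1 : r₁ < 0 := by simpa using hall _ m1
    have h2 : r₂ < 0 := by simpa using hall _ m2
    have h3 : r₃ < 0 := by simpa using hall _ m3
    refine ⟨by rw [ha]; linarith, ?_, ?_⟩
    · rw [hc]
      nlinarith [mul_pos_of_neg_of_neg h1 h2]
    · have e : A*B - C = -((r₁+r₂)*((r₂+r₃)*(r₃+r₁))) := by rw [ha, hb, hc]; ring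
      nlinarith [mul_pos_of_neg_of_neg (by linarith : r₂+r₃ < 0) (by linarith : r₃+r₁ < 0),
        mul_neg_of_neg_of_pos (by linarith : r₁+r₂ < 0)
          (mul_pos_of_neg_of_neg (by linarith : r₂+r₃ < 0) (by linarith : r₃+r₁ < 0))]
  · obtain ⟨ha, hb, hc⟩ := vieta_pair x w hA hB hC hS
    have mx : ((x:ℂ)) ∈ ({z₁, z₂, z₃} : Multiset ℂ) := by rw [hS]; simp
    have mw : w ∈ ({z₁, z₂, z₃} : Multiset ℂ) := by rw [hS]; simp
    have hx : x < 0 := by simpa using hall _ mx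
    have hu : w.re < 0 := hall _ mw
    have him2 : 0 < w.im * w.im := mul_self_pos.mpr hwim
    subst ha hb hc
    refine ⟨by nlinarith, by nlinarith [sq_nonneg w.re], ?_⟩
    nlinarith [mul_pos (neg_pos.mpr hu) (show (0:ℝ) < (x + w.re)^2 + w.im^2 by
      nlinarith [sq_nonneg (x + w.re)]), sq_nonneg (x + w.re)]

lemma lemPos {C : ℝ} {z₁ z₂ z₃ : ℂ}
    (hconj : ({z₁, z₂, z₃} : Multiset ℂ).map conj' = {z₁, z₂, z₃})
    (hC : (C:ℂ) = -(z₁*z₂*z₃)) (hCneg : C < 0) :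
    ∃ z ∈ ({z₁, z₂, z₃} : Multiset ℂ), 0 < z.re := by
  rcases classify z₁ z₂ z₃ hconj with ⟨r₁, r₂, r₃, hS⟩ | ⟨x, w, hwim, hS⟩
  · obtain ⟨hs, hq, hp⟩ := sym_eq hS
    have hc : C = -(r₁*r₂*r₃) := by
      have h := hC; rw [hp] at h; exact_mod_cast h
    by_contra hcon
    push_neg at hcon
    have m1 : ((r₁:ℂ)) ∈ ({z₁, z₂, z₃} : Multiset ℂ) := by rw [hS]; simp
    have m2 : ((r₂:ℂ)) ∈ ({z₁, z₂, z₃} : Multiset ℂ) := by rw [hS]; simp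
    have m3 : ((r₃:ℂ)) ∈ ({z₁, z₂, z₃} : Multiset ℂ) := by rw [hS]; simp
    have h1 : r₁ ≤ 0 := by simpa using hcon _ m1
    have h2 : r₂ ≤ 0 := by simpa using hcon _ m2
    have h3 : r₃ ≤ 0 := by simpa using hcon _ m3
    nlinarith [mul_nonneg (mul_nonneg (neg_nonneg.mpr h1) (neg_nonneg.mpr h2)) (neg_nonneg.mpr h3)]
  · obtain ⟨hs, hq, hp⟩ := sym_eq hS
    have hc : C = -(x*(w.re^2 + w.im^2)) := by
      have e3 := congrArg Complex.re (hC.trans (by rw [hp]))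
      simp [Complex.mul_re, Complex.mul_im] at e3
      nlinarith [e3]
    have him2 : 0 < w.im * w.im := mul_self_pos.mpr hwim
    have hx : 0 < x := by
      by_contra hx
      push_neg at hx
      nlinarith [sq_nonneg w.re, mul_nonpos_of_nonpos_of_nonneg hx
        (show (0:ℝ) ≤ w.re^2 + w.im^2 by nlinarith [sq_nonneg w.re])]
    exact ⟨(x:ℂ), by rw [hS]; simp, by simpa using hx⟩



open Set Filter Topology

lemma cubic_eventually_pos (L c2 c1 c0 : ℝ) (hL : 0 < L) :
    ∃ Y : ℝ, ∀ y, Y ≤ y → 0 < L*y^3 + c2*y^2 + c1*y + c0 := by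
  refine ⟨max 1 ((|c2| + |c1| + |c0| + 1)/L), fun y hy => ?_⟩
  have hy1 : 1 ≤ y := le_trans (le_max_left _ _) hy
  have hy2 : (|c2| + |c1| + |c0| + 1)/L ≤ y := le_trans (le_max_right _ _) hy
  have hLy : |c2| + |c1| + |c0| + 1 ≤ L * y := by
    rw [div_le_iff₀ hL] at hy2; linarith [hy2]
  have hyy : y ≤ y^2 := by nlinarith
  have h1 : (|c2| + |c1| + |c0| + 1) * y^2 ≤ (L*y) * y^2 := by
    apply mul_le_mul_of_nonneg_right hLy; positivity
  have e2 : -|c2| * y^2 ≤ c2 * y^2 := by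
    apply mul_le_mul_of_nonneg_right (neg_abs_le c2); positivity
  have e1 : -|c1| * y^2 ≤ c1 * y := by
    calc -|c1| * y^2 ≤ -|c1| * y := by nlinarith [abs_nonneg c1]
      _ ≤ c1 * y := mul_le_mul_of_nonneg_right (neg_abs_le c1) (by linarith)
  have e0 : -|c0| * y^2 ≤ c0 := by
    calc -|c0| * y^2 ≤ -|c0| * 1 := by nlinarith [abs_nonneg c0]
      _ ≤ c0 := by rw [mul_one]; exact neg_abs_le c0
  nlinarith [h1, e2, e1, e0, sq_nonneg y]

lemma analytic_core (Dd a₀ K e₂ e₁ e₀ f₂ f₁ f₀ : ℝ) (A B Cc Φ : ℝ → ℝ)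
    (hA : ∀ y, A y = Dd*y + a₀) (hB : ∀ y, B y = f₂*y^2 + f₁*y + f₀)
    (hC : ∀ y, Cc y = K*y^3 + e₂*y^2 + e₁*y + e₀)
    (hΦ : ∀ y, Φ y = A y * B y - Cc y)
    (hK : 0 < K) (hL : 0 < Dd*f₂ - K) (hD : 0 < Dd) (hA0 : 0 < a₀)
    (hC0 : 0 < Cc 0) (hΦ0 : 0 < Φ 0)
    (hCnn : ∀ y, 0 < y → 0 ≤ Cc y)
    (hUW : ∀ y, 0 < y → Φ y < 0 → B y < 0)
    (ys : ℝ) (hys : 0 < ys) (hΦys : Φ ys < 0) : False := by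
  have hApos : ∀ y, 0 ≤ y → 0 < A y := by
    intro y hy; rw [hA]; nlinarith
  have hBc : Continuous B := by
    have : B = fun y => f₂*y^2 + f₁*y + f₀ := funext hB
    rw [this]; fun_prop
  have hΦc : Continuous Φ := by
    have : Φ = fun y => (Dd*y + a₀) * (f₂*y^2 + f₁*y + f₀) - (K*y^3 + e₂*y^2 + e₁*y + e₀) := by
      funext y; rw [hΦ, hA, hB, hC]
    rw [this]; fun_prop
  -- Φ is eventually positive
  obtain ⟨Y0, hY0⟩ := cubic_eventually_pos (Dd*f₂ - K) (Dd*f₁ + a₀*f₂ - e₂)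
    (Dd*f₀ + a₀*f₁ - e₁) (a₀*f₀ - e₀) hL
  have hΦbig : ∀ y, Y0 ≤ y → 0 < Φ y := by
    intro y hy
    have := hY0 y hy
    have e : Φ y = (Dd*f₂ - K)*y^3 + (Dd*f₁ + a₀*f₂ - e₂)*y^2
        + (Dd*f₀ + a₀*f₁ - e₁)*y + (a₀*f₀ - e₀) := by
      rw [hΦ, hA, hB, hC]; ring
    linarith [e ▸ this]
  -- left crossing point
  set S₁ : Set ℝ := Icc 0 ys ∩ {y | 0 ≤ Φ y} with hS₁
  have hS₁c : IsCompact S₁ := isCompact_Icc.inter_right (isClosed_le continuous_const hΦc)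
  have hS₁ne : S₁.Nonempty := ⟨0, ⟨le_refl 0, le_of_lt hys⟩, le_of_lt hΦ0⟩
  set yh := sSup S₁ with hyh
  have hyhS : yh ∈ S₁ := hS₁c.sSup_mem hS₁ne
  have hyh0 : 0 ≤ yh := hyhS.1.1
  have hyhys : yh < ys := lt_of_le_of_ne hyhS.1.2
    (fun h => absurd (h ▸ hyhS.2) (not_le.mpr hΦys))
  have hleft : ∀ y, yh < y → y ≤ ys → Φ y < 0 := by
    intro y h1 h2
    by_contra h
    push_neg at h
    exact absurd (le_csSup hS₁c.bddAbove ⟨⟨le_trans hyh0 (le_of_lt h1), h2⟩, h⟩) (not_le.mpr h1)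
  -- right crossing point
  set Ymax := max Y0 ys with hYmax
  set S₂ : Set ℝ := Icc ys Ymax ∩ {y | 0 ≤ Φ y} with hS₂
  have hS₂c : IsCompact S₂ := isCompact_Icc.inter_right (isClosed_le continuous_const hΦc)
  have hS₂ne : S₂.Nonempty := by
    refine ⟨Ymax, ⟨le_max_right _ _, le_refl _⟩, le_of_lt (hΦbig _ (le_max_left _ _))⟩
  set yb := sInf S₂ with hyb
  have hybS : yb ∈ S₂ := hS₂c.sInf_mem hS₂ne
  have hybys : ys < yb := lt_of_le_of_ne hybS.1.1
    (fun h => absurd (h ▸ hybS.2) (not_le.mpr hΦys))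
  have hright : ∀ y, ys ≤ y → y < yb → Φ y < 0 := by
    intro y h1 h2
    by_contra h
    push_neg at h
    have : yb ≤ y := csInf_le hS₂c.bddBelow ⟨⟨h1, le_trans (le_of_lt h2) hybS.1.2⟩, h⟩
    linarith
  -- B is nonpositive at the crossing points
  have hByh : B yh ≤ 0 := by
    have htend : Filter.Tendsto B (𝓝[>] yh) (𝓝 (B yh)) :=
      hBc.continuousAt.continuousWithinAt
    refine le_of_tendsto htend ?_
    filter_upwards [Ioc_mem_nhdsGT_of_mem ⟨le_refl yh, hyhys⟩] with y hy
    exact le_of_lt (hUW y (lt_of_le_of_lt hyh0 hy.1) (hleft y hy.1 hy.2))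
  have hByb : B yb ≤ 0 := by
    have htend : Filter.Tendsto B (𝓝[<] yb) (𝓝 (B yb)) :=
      hBc.continuousAt.continuousWithinAt
    refine le_of_tendsto htend ?_
    filter_upwards [Ico_mem_nhdsLT_of_mem ⟨hybys, le_refl yb⟩] with y hy
    exact le_of_lt (hUW y (lt_of_lt_of_le hys hy.1) (hright y hy.1 hy.2))
  -- at the left crossing point both C and B vanish
  have hAyh := hApos yh hyh0
  have hCge : 0 ≤ Cc yh := by
    rcases eq_or_lt_of_le hyh0 with h | h
    · rw [← h]; exact le_of_lt hC0
    · exact hCnn yh h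
  have hCle : Cc yh ≤ A yh * B yh := by
    have hph : (0:ℝ) ≤ Φ yh := hyhS.2
    have := hΦ yh
    linarith
  have hAByh : A yh * B yh ≤ 0 := by nlinarith [hAyh, hByh]
  have hCyh : Cc yh = 0 := le_antisymm (le_trans hCle hAByh) hCge
  have hByh0 : B yh = 0 := by
    refine le_antisymm hByh ?_
    nlinarith [hCge, hCle, hCyh, hAyh]
  have hyhpos : 0 < yh := by
    rcases eq_or_lt_of_le hyh0 with h | h
    · exfalso; rw [← h] at hCyh; linarith
    · exact h
  -- derivative of C vanishes at yh
  have hderiv : HasDerivAt Cc (3*K*yh^2 + 2*e₂*yh + e₁) yh := by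
    have hd3 : HasDerivAt (fun y : ℝ => y^3) (3*yh^2) yh := by
      simpa using hasDerivAt_pow 3 yh
    have hd2 : HasDerivAt (fun y : ℝ => y^2) (2*yh) yh := by
      simpa using hasDerivAt_pow 2 yh
    have hd1 : HasDerivAt (fun y : ℝ => y) 1 yh := hasDerivAt_id yh
    have hsum : HasDerivAt (fun y : ℝ => K*y^3 + e₂*y^2 + e₁*y + e₀)
        (K*(3*yh^2) + e₂*(2*yh) + e₁*1) yh :=
      (((hd3.const_mul K).add (hd2.const_mul e₂)).add (hd1.const_mul e₁)).add_const e₀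
    have he : Cc = fun y : ℝ => K*y^3 + e₂*y^2 + e₁*y + e₀ := funext hC
    rw [he]
    convert hsum using 1
    ring
  have hmin : IsLocalMin Cc yh := by
    have : ∀ᶠ y in 𝓝 yh, Cc yh ≤ Cc y := by
      filter_upwards [isOpen_Ioi.mem_nhds hyhpos] with y hy
      rw [hCyh]
      exact hCnn y hy
    exact this
  have hd0 : 3*K*yh^2 + 2*e₂*yh + e₁ = 0 := hmin.hasDerivAt_eq_zero hderiv
  -- factor C
  have h1 : K*yh^3 + e₂*yh^2 + e₁*yh + e₀ = 0 := by rw [← hC]; exact hCyh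
  have hfac : ∀ y, Cc y = (y - yh)^2 * (K*y + (e₂ + 2*K*yh)) := by
    intro y
    rw [hC]
    linear_combination (y - yh) * hd0 + h1
  have hm : 0 < e₂ + 2*K*yh := by
    have h0 := hfac 0
    have : Cc 0 = yh^2 * (e₂ + 2*K*yh) := by rw [h0]; ring
    nlinarith [sq_nonneg yh]
  have hCyb : 0 < Cc yb := by
    rw [hfac yb]
    have hne : yb - yh ≠ 0 := by
      have : yh < yb := lt_trans hyhys hybys
      intro h; linarith [sub_eq_zero.mp h]
    have h1' : 0 < (yb - yh)^2 := by positivity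
    have h2' : 0 < K*yb + (e₂ + 2*K*yh) := by nlinarith [mul_pos hK (lt_trans hys hybys)]
    positivity
  -- final contradiction at yb
  have hAyb := hApos yb (le_of_lt (lt_trans hys hybys))
  have hCleyb : Cc yb ≤ A yb * B yb := by
    have hph : (0:ℝ) ≤ Φ yb := hybS.2
    have := hΦ yb
    linarith
  have : A yb * B yb ≤ 0 := by nlinarith [hAyb, hByb]
  linarith


end TuringAux

open TuringAux in
theorem turing_iff_not_turingHopf_and_positive_det
    (J : Matrix (Fin 3) (Fin 3) ℝ) (d₁ d₂ d₃ : ℝ)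
    (hd₁ : 0 < d₁) (hd₂ : 0 < d₂) (hd₃ : 0 < d₃)
    (hJ : ∀ z ∈ eigs J, z.re < 0) :
    ((∃ y > (0 : ℝ), ∃ z ∈ eigs (Jmat J d₁ d₂ d₃ y), 0 < z.re) ∧
        (∀ y > (0 : ℝ), ∀ z ∈ eigs (Jmat J d₁ d₂ d₃ y), 0 < z.re → z.im = 0)) ↔
      (¬(∃ y > (0 : ℝ), ∃ z ∈ eigs (Jmat J d₁ d₂ d₃ y), z.im ≠ 0 ∧ 0 < z.re) ∧
        ∃ y' > (0 : ℝ), 0 < (Jmat J d₁ d₂ d₃ y').det) := by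
  classical
  set A := Af J d₁ d₂ d₃ with hAdef
  set B := Bf J d₁ d₂ d₃ with hBdef
  set Cc := Cf J d₁ d₂ d₃ with hCdef
  have hrt : ∀ y : ℝ, ∃ z₁ z₂ z₃ : ℂ, eigs (Jmat J d₁ d₂ d₃ y) = {z₁, z₂, z₃} ∧
      ((A y : ℂ) = -(z₁+z₂+z₃)) ∧ ((B y : ℂ) = z₁*z₂+z₁*z₃+z₂*z₃) ∧
      ((Cc y : ℂ) = -(z₁*z₂*z₃)) :=
    fun y => roots_triple _ _ _ _ (charpoly_Jmat J d₁ d₂ d₃ y)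
  have hJ0 : Jmat J d₁ d₂ d₃ 0 = J := by simp [Jmat]
  obtain ⟨z₁, z₂, z₃, hS0, hA0, hB0, hC0⟩ := hrt 0
  rw [hJ0] at hS0
  have hconj0 : ({z₁, z₂, z₃} : Multiset ℂ).map (starRingEnd ℂ) = {z₁, z₂, z₃} := by
    rw [← hS0]; exact eigs_conj J
  have hall0 : ∀ z ∈ ({z₁, z₂, z₃} : Multiset ℂ), z.re < 0 := by
    intro z hz; exact hJ z (by rw [hS0]; exact hz)
  obtain ⟨hA0pos, hC0pos, hΦ0pos⟩ := lemRH hconj0 hA0 hB0 hC0 hall0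
  have hApos : ∀ y : ℝ, 0 ≤ y → 0 < A y := by
    intro y hy
    have h0 : A 0 = -(J 0 0 + J 1 1 + J 2 2) := by simp [hAdef, Af]
    have hd : A y = (d₁+d₂+d₃)*y + A 0 := by simp [hAdef, Af]; ring
    rw [hd]
    nlinarith [hA0pos]
  constructor
  · rintro ⟨⟨ys, hys, z, hz, hzre⟩, H3⟩
    have hnoTH : ¬(∃ y > (0:ℝ), ∃ z ∈ eigs (Jmat J d₁ d₂ d₃ y), z.im ≠ 0 ∧ 0 < z.re) := by
      rintro ⟨y, hy, z', hz', him, hre⟩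
      exact him (H3 y hy z' hz' hre)
    refine ⟨hnoTH, ?_⟩
    by_contra hno
    push_neg at hno
    have hCnn : ∀ y : ℝ, 0 < y → 0 ≤ Cc y := by
      intro y hy
      have := hno y hy
      rw [det_Jmat] at this
      simp only [hCdef] at *
      linarith
    set Φ : ℝ → ℝ := fun y => A y * B y - Cc y with hΦdef
    have hUW : ∀ y : ℝ, 0 < y → Φ y < 0 → B y < 0 := by
      intro y hy hphi
      obtain ⟨w₁, w₂, w₃, hS, ha, hb, hc⟩ := hrt y
      have hconj : ({w₁, w₂, w₃} : Multiset ℂ).map (starRingEnd ℂ) = {w₁, w₂, w₃} := by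
        rw [← hS]; exact eigs_conj _
      have hex : ∃ zz ∈ ({w₁, w₂, w₃} : Multiset ℂ), 0 < zz.re := by
        by_contra hcon
        push_neg at hcon
        exact absurd (lemU hconj ha hb hc hcon) (not_le.mpr hphi)
      obtain ⟨zz, hm, hre⟩ := hex
      have him := H3 y hy zz (by rw [hS]; exact hm) hre
      exact (lemW hconj ha hb hc (hApos y (le_of_lt hy)) (hCnn y hy) zz hm hre him).1
    have hΦys : Φ ys < 0 := by
      obtain ⟨w₁, w₂, w₃, hS, ha, hb, hc⟩ := hrt ys
      have hconj : ({w₁, w₂, w₃} : Multiset ℂ).map (starRingEnd ℂ) = {w₁, w₂, w₃} := by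
        rw [← hS]; exact eigs_conj _
      rw [hS] at hz
      have him := H3 ys hys z (by rw [hS]; exact hz) hzre
      exact (lemW hconj ha hb hc (hApos ys (le_of_lt hys)) (hCnn ys hys) z hz hzre him).2
    -- apply the analytic core
    refine analytic_core (d₁+d₂+d₃) (-(J 0 0 + J 1 1 + J 2 2)) (d₁*d₂*d₃)
      (-(d₁*d₂*(J 2 2) + d₁*d₃*(J 1 1) + d₂*d₃*(J 0 0)))
      (d₁*(J 1 1 * J 2 2 - J 1 2 * J 2 1) + d₂*(J 0 0 * J 2 2 - J 0 2 * J 2 0)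
        + d₃*(J 0 0 * J 1 1 - J 0 1 * J 1 0))
      (-(J 0 0 * J 1 1 * J 2 2 - J 0 0 * J 1 2 * J 2 1 - J 0 1 * J 1 0 * J 2 2
        + J 0 1 * J 1 2 * J 2 0 + J 0 2 * J 1 0 * J 2 1 - J 0 2 * J 2 0 * J 1 1))
      (d₁*d₂ + d₁*d₃ + d₂*d₃)
      (-(d₁*(J 1 1 + J 2 2) + d₂*(J 0 0 + J 2 2) + d₃*(J 0 0 + J 1 1)))
      (J 0 0 * J 1 1 - J 0 1 * J 1 0 + J 0 0 * J 2 2 - J 0 2 * J 2 0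
        + J 1 1 * J 2 2 - J 1 2 * J 2 1)
      A B Cc Φ ?_ ?_ ?_ (fun y => rfl) ?_ ?_ ?_ ?_ hC0pos hΦ0pos hCnn hUW ys hys hΦys
    · intro y; simp [hAdef, Af]; ring
    · intro y; simp [hBdef, Bf]; ring
    · intro y; simp [hCdef, Cf]; ring
    · positivity
    · nlinarith [mul_pos hd₁ hd₂, mul_pos hd₁ hd₃, mul_pos hd₂ hd₃,
        mul_pos (mul_pos hd₁ hd₂) hd₃]
    · positivity
    · have h0 : A 0 = -(J 0 0 + J 1 1 + J 2 2) := by simp [hAdef, Af]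
      rw [← h0]; exact hA0pos
  · rintro ⟨hnoTH, y', hy', hdet⟩
    constructor
    · obtain ⟨w₁, w₂, w₃, hS, ha, hb, hc⟩ := hrt y'
      have hconj : ({w₁, w₂, w₃} : Multiset ℂ).map (starRingEnd ℂ) = {w₁, w₂, w₃} := by
        rw [← hS]; exact eigs_conj _
      have hCneg : Cc y' < 0 := by
        rw [det_Jmat] at hdet
        simp only [hCdef] at *
        linarith
      obtain ⟨zz, hm, hre⟩ := lemPos hconj hc hCneg
      exact ⟨y', hy', zz, by rw [hS]; exact hm, hre⟩
    · intro y hy z hz hre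
      by_contra him
      exact hnoTH ⟨y, hy, z, hz, him, hre⟩
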